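/- Let S be a finitely generated commutative additive monoid with only finitely many invertible elements, let S_+ denote its set of non-invertible elements, and let T be an S-module that is finitely generated over S. Assume that for all s ∈ S and t ∈ T the equality s•t = t implies that s is invertible in S. Then the set T_prim := T \ (S_+ • T) generates T over S, i.e., T = ⋃_{t ∈ T_prim} S•t. -/

import Mathlib

/-- Let `S` be a finitely generated commutative additive monoid with
finitely many invertible elements, and `T` a finitely generated `S`-module such that
`s +ᵥ t = t` only for invertible `s`. Then the primitive elements `T \ (S₊ • T)`
generate `T` over `S`. -/
theorem stmt_1 {S T : Type*} [AddCommMonoid S] [AddAction S T]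
    (hfgS : AddMonoid.FG S)
    (hU : {s : S | IsAddUnit s}.Finite)
    (k : ℕ) (g : Fin k → T)
    (hgen : ∀ t : T, ∃ (s : S) (i : Fin k), t = s +ᵥ g i)
    (hfix : ∀ (s : S) (t : T), s +ᵥ t = t → IsAddUnit s) :
    ∀ t : T, ∃ (s : S) (t' : T),
      t' ∈ {x : T | ¬ ∃ (s' : S) (x' : T), ¬ IsAddUnit s' ∧ x = s' +ᵥ x'} ∧
      t = s +ᵥ t' := by
  classical
  -- generators of S
  obtain ⟨F, hF⟩ := (AddMonoid.fg_def.mp hfgS)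
  set V := {x : S // x ∈ F}
  set π : (V → ℕ) → S := fun x => ∑ i : V, x i • (i : S) with hπ
  have hπadd : ∀ x y : V → ℕ, π (x + y) = π x + π y := by
    intro x y
    simp only [hπ, Pi.add_apply, add_smul]
    exact Finset.sum_add_distrib
  have hsurj : ∀ s : S, ∃ x : V → ℕ, π x = s := by
    intro s
    have hs : s ∈ AddSubmonoid.closure (F : Set S) := by rw [hF]; trivial
    induction hs using AddSubmonoid.closure_induction with
    | mem s hs =>
        refine ⟨Pi.single ⟨s, hs⟩ 1, ?_⟩
        show ∑ i : V, (Pi.single (⟨s, hs⟩ : V) 1 : V → ℕ) i • (i : S) = s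
        rw [Fintype.sum_eq_single (⟨s, hs⟩ : V)]
        · simp
        · intro i hi
          rw [Pi.single_eq_of_ne hi, zero_smul]
    | zero => exact ⟨0, by simp [hπ]⟩
    | add a b _ _ ha hb =>
        obtain ⟨x, hx⟩ := ha
        obtain ⟨y, hy⟩ := hb
        exact ⟨x + y, by rw [hπadd, hx, hy]⟩
  -- the property of having a primitive decomposition
  set P : T → Prop := fun t =>
    ∃ (s : S) (t' : T), (¬ ∃ (s' : S) (x' : T), ¬ IsAddUnit s' ∧ t' = s' +ᵥ x') ∧
      t = s +ᵥ t' with hPdef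
  intro t
  by_contra hP
  have hP : ¬ P t := hP
  -- one step of infinite descent
  have key : ∀ x : T, ¬ P x → ∃ (s : S) (y : T), ¬ IsAddUnit s ∧ x = s +ᵥ y ∧ ¬ P y := by
    intro x hx
    have hx' : ∃ (s' : S) (x' : T), ¬ IsAddUnit s' ∧ x = s' +ᵥ x' := by
      by_contra h
      exact hx ⟨0, x, h, (zero_vadd S x).symm⟩
    obtain ⟨s', x', hs', hxe⟩ := hx'
    refine ⟨s', x', hs', hxe, ?_⟩
    rintro ⟨s, t', ht', he⟩
    exact hx ⟨s' + s, t', ht', by rw [hxe, he, add_vadd]⟩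
  set step : {x : T // ¬ P x} → {x : T // ¬ P x} := fun p =>
    ⟨(key p.1 p.2).choose_spec.choose,
      (key p.1 p.2).choose_spec.choose_spec.2.2⟩ with hstepdef
  have hstep : ∀ p : {x : T // ¬ P x},
      ∃ s : S, ¬ IsAddUnit s ∧ p.1 = s +ᵥ (step p).1 := fun p =>
    ⟨(key p.1 p.2).choose, (key p.1 p.2).choose_spec.choose_spec.1,
      (key p.1 p.2).choose_spec.choose_spec.2.1⟩
  set seq : ℕ → {x : T // ¬ P x} := fun n => step^[n] ⟨t, hP⟩ with hseqdef
  have hseqsucc : ∀ n, seq (n + 1) = step (seq n) := by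
    intro n
    simp only [hseqdef, Function.iterate_succ_apply']
  set tn : ℕ → T := fun n => (seq n).1 with htndef
  -- chains of non-units
  have chain : ∀ m n : ℕ, m < n → ∃ c : S, ¬ IsAddUnit c ∧ tn m = c +ᵥ tn n := by
    intro m n hmn
    induction n, hmn using Nat.le_induction with
    | base =>
        obtain ⟨s, hs, he⟩ := hstep (seq m)
        refine ⟨s, hs, ?_⟩
        show (seq m : T) = s +ᵥ (seq (m + 1) : T)
        rw [hseqsucc]; exact he
    | succ n hn ih =>
        obtain ⟨c, hc, hm⟩ := ih
        obtain ⟨s, _, he⟩ := hstep (seq n)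
        refine ⟨c + s, fun h => hc (isAddUnit_of_add_isAddUnit_left h), ?_⟩
        show (seq m : T) = (c + s) +ᵥ (seq (n + 1) : T)
        rw [add_vadd, hseqsucc, ← he]
        exact hm
  -- write each tn in terms of a generator
  choose u i hui using fun n => hgen (tn n)
  -- infinite pigeonhole on generators
  obtain ⟨i₀, hfib⟩ := Finite.exists_infinite_fiber i
  have hinf : {n : ℕ | i n = i₀}.Infinite := by
    rw [← Set.infinite_coe_iff]
    exact hfib
  set N : ℕ → ℕ := Nat.nth (fun n => i n = i₀) with hNdef
  have hNmono : StrictMono N := Nat.nth_strictMono hinf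
  have hNi : ∀ j, i (N j) = i₀ := fun j => Nat.nth_mem_of_infinite hinf j
  -- lift the coefficients to ℕ^V
  choose x hx using fun j => hsurj (u (N j))
  -- Dickson's lemma
  have hpwo : Set.IsPWO (Set.univ : Set (V → ℕ)) :=
    Set.isPWO_of_wellQuasiOrderedLE _
  obtain ⟨m, n, hmn, hle⟩ := Set.PartiallyWellOrderedOn.exists_lt hpwo (f := x) (fun _ => Set.mem_univ _)
  -- from x m ≤ x n get u (N n) = u (N m) + d
  have hdx : x m + (x n - x m) = x n := by
    funext v
    simp only [Pi.add_apply, Pi.sub_apply]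
    exact Nat.add_sub_cancel' (hle v)
  have hd : u (N n) = u (N m) + π (x n - x m) := by
    rw [← hx n, ← hx m, ← hπadd, hdx]
  -- derive the contradiction
  obtain ⟨c, hc, hcm⟩ := chain (N m) (N n) (hNmono hmn)
  have h1 : tn (N n) = π (x n - x m) +ᵥ tn (N m) := by
    rw [hui (N n), hui (N m), hNi n, hNi m, hd, add_comm, add_vadd]
  have h2 : tn (N m) = (c + π (x n - x m)) +ᵥ tn (N m) := by
    rw [add_vadd, ← h1, ← hcm]
  exact hc (isAddUnit_of_add_isAddUnit_left (hfix _ _ h2.symm))
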